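/- For p > 0 and every n ∈ ℕ, the n-th derivative of the Gamma(p,1) density satisfies d^n/dx^n f_p(x) = Σ_{i=0}^{n} C(n,i) (−1)^i f_{p−n+i}(x) for all x > 0, where f_q(x) = e^{-x} x^{q-1}/Γ(q) for q ∉ {0,−1,−2,…} and f_q ≡ 0 for q ∈ {0,−1,−2,…}. -/

import Mathlib

/-- `f_q(x) = e^{-x} x^{q-1}/Γ(q)`; since `Γ` vanishes at nonpositive integers and
division by zero is zero in Lean, this is identically `0` for `q ∈ {0,-1,-2,…}`,
matching the paper's convention. -/
noncomputable def gammaDensity (q x : ℝ) : ℝ := Real.exp (-x) * x ^ (q - 1) / Real.Gamma q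

lemma inv_Gamma_sub_one (q : ℝ) : (Real.Gamma (q-1))⁻¹ = (q-1) / Real.Gamma q := by
  rcases eq_or_ne q 1 with h | h
  · simp [h, Real.Gamma_zero]
  · have hq : Real.Gamma q = (q-1) * Real.Gamma (q-1) := by
      have := Real.Gamma_add_one (sub_ne_zero.mpr h)
      simpa using this
    rw [hq]
    rcases eq_or_ne (Real.Gamma (q-1)) 0 with h0 | h0
    · simp [h0]
    · field_simp

lemma gammaDensity_hasDeriv (q x : ℝ) (hx : 0 < x) :
    HasDerivAt (gammaDensity q) (gammaDensity (q-1) x - gammaDensity q x) x := by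
  have h1 : HasDerivAt (fun y : ℝ => Real.exp (-y)) (-Real.exp (-x)) x := by
    simpa using ((hasDerivAt_neg x).exp)
  have h2 : HasDerivAt (fun y : ℝ => y ^ (q-1)) ((q-1) * x ^ (q-1-1)) x :=
    Real.hasDerivAt_rpow_const (Or.inl hx.ne')
  have h3 := (h1.mul h2).div_const (Real.Gamma q)
  have heq : (-Real.exp (-x) * x ^ (q-1) + Real.exp (-x) * ((q-1) * x ^ (q-1-1))) / Real.Gamma q
      = gammaDensity (q-1) x - gammaDensity q x := by
    unfold gammaDensity
    rw [div_eq_mul_inv (Real.exp (-x) * x ^ (q - 1 - 1)), inv_Gamma_sub_one]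
    field_simp
    ring
  rw [← heq]
  exact h3

theorem stmt15 :
    ∀ p : ℝ, 0 < p → ∀ n : ℕ, ∀ x : ℝ, 0 < x →
      iteratedDeriv n (gammaDensity p) x =
        ∑ i ∈ Finset.range (n + 1),
          (n.choose i : ℝ) * (-1) ^ i * gammaDensity (p - n + i) x := by
  intro p hp n
  induction n with
  | zero => intro x hx; simp
  | succ n ih =>
    intro x hx
    rw [iteratedDeriv_succ]
    have hEv : iteratedDeriv n (gammaDensity p) =ᶠ[nhds x]
        (fun y => ∑ i ∈ Finset.range (n + 1),
          (n.choose i : ℝ) * (-1) ^ i * gammaDensity (p - n + i) y) := by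
      filter_upwards [isOpen_Ioi.mem_nhds hx] with y hy
      exact ih y hy
    rw [hEv.deriv_eq]
    have hS : HasDerivAt (fun y => ∑ i ∈ Finset.range (n + 1),
          (n.choose i : ℝ) * (-1) ^ i * gammaDensity (p - n + i) y)
        (∑ i ∈ Finset.range (n + 1),
          (n.choose i : ℝ) * (-1) ^ i *
            (gammaDensity (p - n + i - 1) x - gammaDensity (p - n + i) x)) x :=
      HasDerivAt.fun_sum fun i _ => (gammaDensity_hasDeriv (p - n + i) x hx).const_mul _
    rw [hS.deriv]
    -- now a pure combinatorial identity
    have key : ∀ F : ℕ → ℝ,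
        ∑ i ∈ Finset.range (n+1), (n.choose i:ℝ)*(-1)^i * (F i - F (i+1))
        = ∑ j ∈ Finset.range (n+2), ((n+1).choose j : ℝ)*(-1)^j * F j := by
      intro F
      rw [Finset.sum_range_succ' (fun j => ((n+1).choose j:ℝ)*(-1)^j * F j) (n+1)]
      have hsplit : ∀ i, (((n+1).choose (i+1)):ℝ)*(-1)^(i+1) * F (i+1)
          = -((n.choose i:ℝ)*(-1)^i * F (i+1)) + (n.choose (i+1):ℝ)*(-1)^(i+1) * F (i+1) := by
        intro i
        rw [Nat.choose_succ_succ]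
        push_cast
        ring
      rw [Finset.sum_congr rfl (fun i _ => hsplit i), Finset.sum_add_distrib]
      have h2 : ∑ i ∈ Finset.range (n+1), (n.choose (i+1):ℝ)*(-1)^(i+1) * F (i+1)
            + ((n+1).choose 0 : ℝ)*(-1)^0 * F 0
          = ∑ j ∈ Finset.range (n+1), (n.choose j:ℝ)*(-1)^j * F j := by
        have := Finset.sum_range_succ' (fun j => ((n).choose j:ℝ)*(-1)^j * F j) (n+1)
        rw [Finset.sum_range_succ] at this
        simp only [Nat.choose_succ_self, Nat.cast_zero, zero_mul, mul_zero, add_zero,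
          Nat.choose_zero_right, Nat.cast_one] at this ⊢
        linarith [this]
      rw [add_assoc, h2]
      simp [mul_sub, Finset.sum_sub_distrib]
      ring
    have hF1 : ∀ i : ℕ, gammaDensity (p - (n:ℝ) + i - 1) x
        = gammaDensity (p - ((n+1 : ℕ):ℝ) + i) x := by
      intro i; congr 1; push_cast; ring
    have hF2 : ∀ i : ℕ, gammaDensity (p - (n:ℝ) + i) x
        = gammaDensity (p - ((n+1 : ℕ):ℝ) + ((i+1 : ℕ):ℝ)) x := by
      intro i; congr 1; push_cast; ring
    simp only [hF1, hF2]
    exact key (fun j => gammaDensity (p - ((n+1 : ℕ):ℝ) + j) x)
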